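/- Let g_{11}, g_{12}, g_{22} ∈ ℝ with g_{11} > 0 and Δ := g_{11}g_{22} − g_{12}² > 0, and f(θ) = √(g_{11}cos²θ + 2g_{12}cos θ sin θ + g_{22}sin²θ). Then f satisfies the ODE (f + f'')·P = −sin θ·f' + cos θ·f with P(θ) = K₃cos³θ + K₂cos²θ sin θ + K₁cos θ sin²θ + K₀sin³θ if and only if K₃ = g_{11}²/Δ, K₂ = 3g_{11}g_{12}/Δ, K₁ = 3g_{12}²/Δ + 1, K₀ = g_{12}g_{22}/Δ. -/

import Mathlib

open Real


noncomputable def Qa (g₁₁ g₁₂ g₂₂ θ : ℝ) : ℝ :=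
  g₁₁ * cos θ ^ 2 + 2 * g₁₂ * cos θ * sin θ + g₂₂ * sin θ ^ 2

noncomputable def Qb (g₁₁ g₁₂ g₂₂ θ : ℝ) : ℝ :=
  -2*g₁₁*(cos θ * sin θ) + 2*g₁₂*(cos θ^2 - sin θ^2) + 2*g₂₂*(sin θ * cos θ)

noncomputable def Qc (g₁₁ g₁₂ g₂₂ θ : ℝ) : ℝ :=
  -2*g₁₁*(cos θ^2 - sin θ^2) - 8*g₁₂*(cos θ * sin θ) + 2*g₂₂*(cos θ^2 - sin θ^2)

lemma Qa_deriv (g₁₁ g₁₂ g₂₂ θ : ℝ) :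
    HasDerivAt (fun x => Qa g₁₁ g₁₂ g₂₂ x) (Qb g₁₁ g₁₂ g₂₂ θ) θ := by
  have h := ((((Real.hasDerivAt_cos θ).pow 2).const_mul g₁₁).add
      (((Real.hasDerivAt_cos θ).const_mul (2*g₁₂)).mul (Real.hasDerivAt_sin θ))).add
      (((Real.hasDerivAt_sin θ).pow 2).const_mul g₂₂)
  have hv : Qb g₁₁ g₁₂ g₂₂ θ =
      g₁₁ * ((2:ℕ) * cos θ ^ (2-1) * (-sin θ)) +
        (2*g₁₂ * (-sin θ) * sin θ + 2*g₁₂*cos θ * cos θ) +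
        g₂₂ * ((2:ℕ) * sin θ ^ (2-1) * cos θ) := by
    unfold Qb; push_cast; ring
  rw [hv]
  exact h

lemma Qb_deriv (g₁₁ g₁₂ g₂₂ θ : ℝ) :
    HasDerivAt (fun x => Qb g₁₁ g₁₂ g₂₂ x) (Qc g₁₁ g₁₂ g₂₂ θ) θ := by
  have h := ((((Real.hasDerivAt_cos θ).mul (Real.hasDerivAt_sin θ)).const_mul (-2*g₁₁)).add
      ((((Real.hasDerivAt_cos θ).pow 2).sub ((Real.hasDerivAt_sin θ).pow 2)).const_mul (2*g₁₂))).add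
      (((Real.hasDerivAt_sin θ).mul (Real.hasDerivAt_cos θ)).const_mul (2*g₂₂))
  have hv : Qc g₁₁ g₁₂ g₂₂ θ =
      -2*g₁₁ * ((-sin θ) * sin θ + cos θ * cos θ) +
        2*g₁₂ * ((2:ℕ) * cos θ ^ (2-1) * (-sin θ) - (2:ℕ) * sin θ ^ (2-1) * cos θ) +
        2*g₂₂ * (cos θ * cos θ + sin θ * (-sin θ)) := by
    unfold Qc; push_cast; ring
  rw [hv]
  exact h

lemma Qa_pos (g₁₁ g₁₂ g₂₂ : ℝ) (h11 : 0 < g₁₁) (hdet : 0 < g₁₁ * g₂₂ - g₁₂ ^ 2) (θ : ℝ) :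
    0 < Qa g₁₁ g₁₂ g₂₂ θ := by
  have hp := sin_sq_add_cos_sq θ
  unfold Qa
  rcases eq_or_ne (sin θ) 0 with h | h
  · have hc : cos θ ^ 2 = 1 := by nlinarith
    rw [h, hc]; nlinarith
  · have hs : 0 < sin θ ^ 2 := by positivity
    nlinarith [sq_nonneg (g₁₁ * cos θ + g₁₂ * sin θ), mul_pos hdet hs]

lemma key_ident (g₁₁ g₁₂ g₂₂ θ : ℝ) :
    4 * Qa g₁₁ g₁₂ g₂₂ θ ^ 2 + 2 * Qa g₁₁ g₁₂ g₂₂ θ * Qc g₁₁ g₁₂ g₂₂ θ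
      - Qb g₁₁ g₁₂ g₂₂ θ ^ 2 = 4 * (g₁₁ * g₂₂ - g₁₂ ^ 2) := by
  have hp := sin_sq_add_cos_sq θ
  unfold Qa Qb Qc
  linear_combination (4 * (g₁₁ * g₂₂ - g₁₂ ^ 2) * (cos θ ^ 2 + sin θ ^ 2 + 1)) * hp

lemma B_ident (g₁₁ g₁₂ g₂₂ θ : ℝ) :
    2 * cos θ * Qa g₁₁ g₁₂ g₂₂ θ - sin θ * Qb g₁₁ g₁₂ g₂₂ θ
      = 2 * (g₁₁ * cos θ + g₁₂ * sin θ) := by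
  have hp := sin_sq_add_cos_sq θ
  unfold Qa Qb
  linear_combination (2 * (g₁₁ * cos θ + g₁₂ * sin θ)) * hp

section derivs
variable (g₁₁ g₁₂ g₂₂ : ℝ)

lemma sqrtQ_deriv (h11 : 0 < g₁₁) (hdet : 0 < g₁₁ * g₂₂ - g₁₂ ^ 2) (θ : ℝ) :
    HasDerivAt (fun x => Real.sqrt (Qa g₁₁ g₁₂ g₂₂ x))
      (Qb g₁₁ g₁₂ g₂₂ θ / (2 * Real.sqrt (Qa g₁₁ g₁₂ g₂₂ θ))) θ :=
  (Qa_deriv g₁₁ g₁₂ g₂₂ θ).sqrt (Qa_pos g₁₁ g₁₂ g₂₂ h11 hdet θ).ne'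

lemma deriv1_eq (h11 : 0 < g₁₁) (hdet : 0 < g₁₁ * g₂₂ - g₁₂ ^ 2) :
    deriv (fun x => Real.sqrt (Qa g₁₁ g₁₂ g₂₂ x))
      = fun θ => Qb g₁₁ g₁₂ g₂₂ θ / (2 * Real.sqrt (Qa g₁₁ g₁₂ g₂₂ θ)) :=
  funext fun θ => (sqrtQ_deriv g₁₁ g₁₂ g₂₂ h11 hdet θ).deriv

lemma deriv2_eq (h11 : 0 < g₁₁) (hdet : 0 < g₁₁ * g₂₂ - g₁₂ ^ 2) (θ : ℝ) :
    deriv (deriv (fun x => Real.sqrt (Qa g₁₁ g₁₂ g₂₂ x))) θ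
      = (Qc g₁₁ g₁₂ g₂₂ θ * (2 * Real.sqrt (Qa g₁₁ g₁₂ g₂₂ θ))
          - Qb g₁₁ g₁₂ g₂₂ θ * (2 * (Qb g₁₁ g₁₂ g₂₂ θ / (2 * Real.sqrt (Qa g₁₁ g₁₂ g₂₂ θ)))))
        / (2 * Real.sqrt (Qa g₁₁ g₁₂ g₂₂ θ)) ^ 2 := by
  rw [deriv1_eq g₁₁ g₁₂ g₂₂ h11 hdet]
  have hne : (2 : ℝ) * Real.sqrt (Qa g₁₁ g₁₂ g₂₂ θ) ≠ 0 := by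
    have := Real.sqrt_pos.mpr (Qa_pos g₁₁ g₁₂ g₂₂ h11 hdet θ)
    positivity
  exact ((Qb_deriv g₁₁ g₁₂ g₂₂ θ).div
    ((sqrtQ_deriv g₁₁ g₁₂ g₂₂ h11 hdet θ).const_mul 2) hne).deriv

end derivs

lemma equiv_pt (g₁₁ g₁₂ g₂₂ : ℝ) (h11 : 0 < g₁₁) (hdet : 0 < g₁₁ * g₂₂ - g₁₂ ^ 2)
    (K₀ K₁ K₂ K₃ θ : ℝ) :
    ((Real.sqrt (Qa g₁₁ g₁₂ g₂₂ θ) + deriv (deriv (fun x => Real.sqrt (Qa g₁₁ g₁₂ g₂₂ x))) θ)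
        * (K₃ * cos θ ^ 3 + K₂ * cos θ ^ 2 * sin θ + K₁ * cos θ * sin θ ^ 2 + K₀ * sin θ ^ 3)
      = -sin θ * deriv (fun x => Real.sqrt (Qa g₁₁ g₁₂ g₂₂ x)) θ
          + cos θ * Real.sqrt (Qa g₁₁ g₁₂ g₂₂ θ))
    ↔ (g₁₁ * g₂₂ - g₁₂ ^ 2)
        * (K₃ * cos θ ^ 3 + K₂ * cos θ ^ 2 * sin θ + K₁ * cos θ * sin θ ^ 2 + K₀ * sin θ ^ 3)
      = (g₁₁ * cos θ + g₁₂ * sin θ) * Qa g₁₁ g₁₂ g₂₂ θ := by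
  set r := Real.sqrt (Qa g₁₁ g₁₂ g₂₂ θ) with hrdef
  have hQpos := Qa_pos g₁₁ g₁₂ g₂₂ h11 hdet θ
  have hr : 0 < r := Real.sqrt_pos.mpr hQpos
  have hr2 : r ^ 2 = Qa g₁₁ g₁₂ g₂₂ θ := Real.sq_sqrt hQpos.le
  have hd1 : deriv (fun x => Real.sqrt (Qa g₁₁ g₁₂ g₂₂ x)) θ
      = Qb g₁₁ g₁₂ g₂₂ θ / (2 * r) := (sqrtQ_deriv g₁₁ g₁₂ g₂₂ h11 hdet θ).deriv
  have hA : r + deriv (deriv (fun x => Real.sqrt (Qa g₁₁ g₁₂ g₂₂ x))) θ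
      = (g₁₁ * g₂₂ - g₁₂ ^ 2) / r ^ 3 := by
    rw [deriv2_eq g₁₁ g₁₂ g₂₂ h11 hdet θ]
    have e1 : r + (Qc g₁₁ g₁₂ g₂₂ θ * (2 * r)
          - Qb g₁₁ g₁₂ g₂₂ θ * (2 * (Qb g₁₁ g₁₂ g₂₂ θ / (2 * r)))) / (2 * r) ^ 2
        = (4 * (r ^ 2) ^ 2 + 2 * (r ^ 2) * Qc g₁₁ g₁₂ g₂₂ θ - Qb g₁₁ g₁₂ g₂₂ θ ^ 2)
            / (4 * r ^ 2 * r) := by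
      field_simp
      ring
    rw [e1, hr2, key_ident g₁₁ g₁₂ g₂₂ θ, ← hr2]
    rw [show (4:ℝ) * r ^ 2 * r = 4 * r ^ 3 by ring]
    rw [mul_div_mul_left _ _ (by norm_num : (4:ℝ) ≠ 0)]
  have hB : -sin θ * (Qb g₁₁ g₁₂ g₂₂ θ / (2 * r)) + cos θ * r
      = (g₁₁ * cos θ + g₁₂ * sin θ) / r := by
    rw [eq_div_iff hr.ne']
    field_simp
    linear_combination B_ident g₁₁ g₁₂ g₂₂ θ
      + (2 * cos θ) * hr2
  rw [hd1, hA, hB, div_mul_eq_mul_div, div_eq_div_iff (by positivity) hr.ne']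
  constructor
  · intro h
    refine mul_right_cancel₀ hr.ne' ?_
    rw [← hr2]
    linear_combination h
  · intro h
    linear_combination r * h - ((g₁₁ * cos θ + g₁₂ * sin θ) * r) * hr2

theorem stmt11 (g₁₁ g₁₂ g₂₂ : ℝ) (h11 : 0 < g₁₁) (hdet : 0 < g₁₁ * g₂₂ - g₁₂ ^ 2)
    (f : ℝ → ℝ)
    (hf : ∀ θ, f θ = Real.sqrt
      (g₁₁ * cos θ ^ 2 + 2 * g₁₂ * cos θ * sin θ + g₂₂ * sin θ ^ 2))
    (K₀ K₁ K₂ K₃ : ℝ) :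
    (∀ θ, (f θ + deriv (deriv f) θ)
          * (K₃ * cos θ ^ 3 + K₂ * cos θ ^ 2 * sin θ
            + K₁ * cos θ * sin θ ^ 2 + K₀ * sin θ ^ 3)
        = -sin θ * deriv f θ + cos θ * f θ)
      ↔ (K₃ = g₁₁ ^ 2 / (g₁₁ * g₂₂ - g₁₂ ^ 2) ∧
         K₂ = 3 * g₁₁ * g₁₂ / (g₁₁ * g₂₂ - g₁₂ ^ 2) ∧
         K₁ = 3 * g₁₂ ^ 2 / (g₁₁ * g₂₂ - g₁₂ ^ 2) + 1 ∧
         K₀ = g₁₂ * g₂₂ / (g₁₁ * g₂₂ - g₁₂ ^ 2)) := by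
  have hfe : f = fun θ => Real.sqrt (Qa g₁₁ g₁₂ g₂₂ θ) := funext fun θ => hf θ
  subst hfe
  constructor
  · intro h
    have hm : ∀ θ, (g₁₁ * g₂₂ - g₁₂ ^ 2)
        * (K₃ * cos θ ^ 3 + K₂ * cos θ ^ 2 * sin θ + K₁ * cos θ * sin θ ^ 2 + K₀ * sin θ ^ 3)
        = (g₁₁ * cos θ + g₁₂ * sin θ)
          * (g₁₁ * cos θ ^ 2 + 2 * g₁₂ * cos θ * sin θ + g₂₂ * sin θ ^ 2) := by
      intro θ
      have := (equiv_pt g₁₁ g₁₂ g₂₂ h11 hdet K₀ K₁ K₂ K₃ θ).mp (h θ)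
      simpa only [Qa] using this
    have h2ne : Real.sqrt 2 / 2 ≠ 0 := by positivity
    have e0 := hm 0
    have e1 := hm (π / 2)
    have e2 := hm (π / 4)
    have e3 := hm (-(π / 4))
    rw [Real.cos_zero, Real.sin_zero] at e0
    rw [Real.cos_pi_div_two, Real.sin_pi_div_two] at e1
    rw [Real.cos_pi_div_four, Real.sin_pi_div_four] at e2
    rw [Real.cos_neg, Real.sin_neg, Real.cos_pi_div_four, Real.sin_pi_div_four] at e3
    have hS : (g₁₁ * g₂₂ - g₁₂ ^ 2) * (K₃ + K₂ + K₁ + K₀)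
        = (g₁₁ + g₁₂) * (g₁₁ + 2 * g₁₂ + g₂₂) := by
      refine mul_right_cancel₀ (pow_ne_zero 3 h2ne) ?_
      linear_combination e2
    have hD : (g₁₁ * g₂₂ - g₁₂ ^ 2) * (K₃ - K₂ + K₁ - K₀)
        = (g₁₁ - g₁₂) * (g₁₁ - 2 * g₁₂ + g₂₂) := by
      refine mul_right_cancel₀ (pow_ne_zero 3 h2ne) ?_
      linear_combination e3
    refine ⟨?_, ?_, ?_, ?_⟩
    · rw [eq_div_iff hdet.ne']
      linear_combination e0
    · rw [eq_div_iff hdet.ne']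
      linear_combination hS / 2 - hD / 2 - e1
    · field_simp
      linear_combination hS / 2 + hD / 2 - e0
    · rw [eq_div_iff hdet.ne']
      linear_combination e1
  · rintro ⟨hK₃, hK₂, hK₁, hK₀⟩ θ
    refine (equiv_pt g₁₁ g₁₂ g₂₂ h11 hdet K₀ K₁ K₂ K₃ θ).mpr ?_
    subst hK₃ hK₂ hK₁ hK₀
    simp only [Qa]
    field_simp
    ring
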